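/- For every K ⊆ [n-1], the polynomial Σ_{v ∈ W(K)} t^{des(v)} is palindromic of degree at most n−1; that is, its coefficient of t^i equals its coefficient of t^{n-1-i} for all 0 ≤ i ≤ n−1. -/

import Mathlib

open Finset Polynomial

open scoped Classical

noncomputable section

/-- The letter (0-based) at 0-based position `i` in the one-line notation of `w`
(junk value `0` out of range). -/
def ol (n : ℕ) (w : Equiv.Perm (Fin n)) (i : ℕ) : ℕ :=
  if h : i < n then (w ⟨i, h⟩ : ℕ) else 0

/-- The descent set of `w`, with 0-based positions: `i ∈ DesSet n w` (for `i ≤ n-2`)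
means `w(i) > w(i+1)`.  (This is the paper's descent `i+1 ∈ [n-1]`.) -/
def DesSet (n : ℕ) (w : Equiv.Perm (Fin n)) : Finset ℕ :=
  (Finset.range (n - 1)).filter fun i => ol n w (i + 1) < ol n w i

/-- The number of descents of `w`. -/
def des (n : ℕ) (w : Equiv.Perm (Fin n)) : ℕ := (DesSet n w).card

/-- `w` has no double descent: no two consecutive descent positions. -/
def NoDoubleDescent (n : ℕ) (w : Equiv.Perm (Fin n)) : Prop :=
  ∀ i ∈ DesSet n w, i + 1 ∉ DesSet n w

/-- `w` has no initial descent (no descent at the first position). -/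
def NoInitialDescent (n : ℕ) (w : Equiv.Perm (Fin n)) : Prop := 0 ∉ DesSet n w

/-- `w` has no final descent (no descent at the last position, paper's `n-1`). -/
def NoFinalDescent (n : ℕ) (w : Equiv.Perm (Fin n)) : Prop := n - 2 ∉ DesSet n w

/-- The involution `w ↦ w*`, `w*(i) = n+1-w(n+1-i)` in 1-based notation. -/
def starPerm (n : ℕ) (w : Equiv.Perm (Fin n)) : Equiv.Perm (Fin n) :=
  (Fin.revPerm.trans w).trans Fin.revPerm

/-- The letter at 1-based position `i ∈ [1,n]` of `w`, as an element of `ℕ∞`,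
with the boundary convention `w(0) = w(n+1) = ⊤`. -/
def olb (n : ℕ) (w : Equiv.Perm (Fin n)) (i : ℕ) : ℕ∞ :=
  if h : 1 ≤ i ∧ i ≤ n then ((w ⟨i - 1, by omega⟩ : ℕ) : ℕ∞) else ⊤

/-- 1-based position `i` is a peak of `w` : `w(i-1) < w(i) > w(i+1)` (boundaries `⊤`,
so positions `1` and `n` are never peaks). -/
def IsPeak (n : ℕ) (w : Equiv.Perm (Fin n)) (i : ℕ) : Prop :=
  olb n w (i - 1) < olb n w i ∧ olb n w (i + 1) < olb n w i

/-- 1-based position `i` is a valley of `w` : `w(i-1) > w(i) < w(i+1)`. -/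
def IsValley (n : ℕ) (w : Equiv.Perm (Fin n)) (i : ℕ) : Prop :=
  olb n w i < olb n w (i - 1) ∧ olb n w i < olb n w (i + 1)

/-- 1-based position `i` holds a free letter of `w` : neither a peak nor a valley. -/
def IsFree (n : ℕ) (w : Equiv.Perm (Fin n)) (i : ℕ) : Prop :=
  ¬ IsPeak n w i ∧ ¬ IsValley n w i

/-- The number of peaks of `w`. -/
def pk (n : ℕ) (w : Equiv.Perm (Fin n)) : ℕ :=
  ((Finset.Icc 1 n).filter (IsPeak n w)).card

/-- The number of inversions of `w`, i.e. its Coxeter length. -/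
def invNum (n : ℕ) (w : Equiv.Perm (Fin n)) : ℕ :=
  (Finset.univ.filter fun p : Fin n × Fin n => p.1 < p.2 ∧ w p.2 < w p.1).card

/-- The standard parabolic subgroup `W_K` of `S_n` generated by the adjacent
transpositions `(k, k+1)` (1-based letters `k ∈ K`, i.e. 0-based `k-1`, `k`). -/
def WK (n : ℕ) (K : Finset ℕ) : Subgroup (Equiv.Perm (Fin n)) :=
  Subgroup.closure { s | ∃ k ∈ K, ∃ hk : k < n,
    s = Equiv.swap (⟨k - 1, lt_of_le_of_lt (Nat.sub_le k 1) hk⟩ : Fin n) ⟨k, hk⟩ }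

/-- The set `W^K` of permutations in which, for every `k ∈ K`, the letter `k`
appears before the letter `k+1` (1-based letters; these are the minimal-length
coset representatives of `W_K`). -/
def WKreps (n : ℕ) (K : Finset ℕ) : Finset (Equiv.Perm (Fin n)) :=
  Finset.univ.filter fun w => ∀ k ∈ K, ∀ hk : k < n,
    w⁻¹ (⟨k - 1, lt_of_le_of_lt (Nat.sub_le k 1) hk⟩ : Fin n) < w⁻¹ ⟨k, hk⟩

/-- The set `W(K) = { v ∈ S_n : v⁻¹(k) − v⁻¹(k+1) ≤ 1 for all k ∈ K }`
(1-based letters `k`, `k+1`). -/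
def Wset (n : ℕ) (K : Finset ℕ) : Finset (Equiv.Perm (Fin n)) :=
  Finset.univ.filter fun v => ∀ k ∈ K, ∀ hk : k < n,
    ((v⁻¹ (⟨k - 1, lt_of_le_of_lt (Nat.sub_le k 1) hk⟩ : Fin n) : Fin n) : ℕ) ≤
      ((v⁻¹ (⟨k, hk⟩ : Fin n) : Fin n) : ℕ) + 1

/-- The orbit of `i` under the action of `W_K` on positions/letters. -/
def orbitFinset (n : ℕ) (K : Finset ℕ) (i : Fin n) : Finset (Fin n) :=
  Finset.univ.filter fun j => ∃ u ∈ WK n K, u i = j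

/-- The set of orbits of `W_K` on `[n]`. -/
def orbitsFinset (n : ℕ) (K : Finset ℕ) : Finset (Finset (Fin n)) :=
  Finset.univ.image (orbitFinset n K)

/-- The one-line notation of `w` as a list of (0-based) letters. -/
def word (n : ℕ) (w : Equiv.Perm (Fin n)) : List ℕ := List.ofFn fun i => (w i : ℕ)

/-- A single valley hop of the free letter `j` from a downslope (in `v`) to the
nearest upslope of the same height (giving `u`): `j` moves rightwards directly
across the adjacent valley `B`. -/
def hopStep (v u : List ℕ) : Prop :=
  ∃ (A B C : List ℕ) (j : ℕ), B ≠ [] ∧ (∀ x ∈ B, x < j) ∧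
    (∀ x ∈ A.getLast?, j < x) ∧ (∀ x ∈ C.head?, j < x) ∧
    v = A ++ j :: (B ++ C) ∧ u = A ++ (B ++ j :: C)

/-- Hop equivalence (valley hopping) on `S_n`: the equivalence closure of single
hops of free letters. -/
def hopEquiv (n : ℕ) (a b : Equiv.Perm (Fin n)) : Prop :=
  Relation.EqvGen (fun x y : Equiv.Perm (Fin n) => hopStep (word n x) (word n y)) a b

/-- The index (1-based) of the `W_K`-orbit containing the letter `x ∈ [1,n]`:
orbits are consecutive intervals, numbered from the left. -/
def orbIdx (K : Finset ℕ) (x : ℕ) : ℕ :=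
  1 + ((Finset.Icc 1 (x - 1)).filter fun t => t ∉ K).card

/-- The (0-based) descent set of a word `v` of length `n`. -/
def wdes (n : ℕ) (v : Fin n → ℕ) : Finset ℕ :=
  (Finset.range (n - 1)).filter fun i =>
    if h : i + 1 < n then v ⟨i + 1, h⟩ < v ⟨i, by omega⟩ else False

/-- The word `v` has content `μ(K)`: for each `i`, the number of letters of `v`
equal to `i` is the size of the `i`-th orbit of `W_K` on `[1,n]`. -/
def HasContent (n : ℕ) (K : Finset ℕ) (v : Fin n → ℕ) : Prop :=
  ∀ i : ℕ, (Finset.univ.filter fun j => v j = i).card =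
    ((Finset.Icc 1 n).filter fun x => orbIdx K x = i).card

/-- `w` is the standardization `φ(v)` of the word `v`: `w` orders positions by
letter value, breaking ties from left to right.  (This is exactly the map `φ`
of the paper: if `j` is the `k`-th smallest position with `v(j) = i`, then
`φ(v)(j) = k + μ₁ + ⋯ + μ_{i-1}`.) -/
def IsStd (n : ℕ) (v : Fin n → ℕ) (w : Equiv.Perm (Fin n)) : Prop :=
  ∀ j j' : Fin n, w j < w j' ↔ (v j < v j' ∨ (v j = v j' ∧ j < j'))

/-! ### Auxiliary development for the palindromicity proof -/

/-- Number of bonds of `K` that are `≤ a`. -/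
def cB (K : Finset ℕ) (a : ℕ) : ℕ := (K.filter fun t => t ≤ a).card

lemma cB_mono (K : Finset ℕ) {a b : ℕ} (h : a ≤ b) : cB K a ≤ cB K b := by
  apply Finset.card_le_card
  intro t ht
  simp only [Finset.mem_filter] at ht ⊢
  exact ⟨ht.1, le_trans ht.2 h⟩

lemma cB_succ (K : Finset ℕ) (a : ℕ) :
    cB K (a + 1) = cB K a + (if a + 1 ∈ K then 1 else 0) := by
  unfold cB
  have hsplit : K.filter (fun t => t ≤ a + 1) =
      (K.filter fun t => t ≤ a) ∪ (K.filter fun t => t = a + 1) := by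
    ext t
    simp only [Finset.mem_filter, Finset.mem_union]
    constructor
    · rintro ⟨h1, h2⟩
      by_cases h : t = a + 1
      · exact Or.inr ⟨h1, h⟩
      · exact Or.inl ⟨h1, by omega⟩
    · rintro (⟨h1, h2⟩ | ⟨h1, h2⟩)
      · exact ⟨h1, by omega⟩
      · exact ⟨h1, by omega⟩
  rw [hsplit, Finset.card_union_of_disjoint]
  · congr 1
    rw [Finset.filter_eq']
    split <;> simp
  · rw [Finset.disjoint_left]
    intro t ht ht'
    simp only [Finset.mem_filter] at ht ht'
    omega

lemma cB_le {K : Finset ℕ} (hK1 : ∀ k ∈ K, 1 ≤ k) (a : ℕ) : cB K a ≤ a := by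
  have h : K.filter (fun t => t ≤ a) ⊆ Finset.Icc 1 a := by
    intro t ht
    simp only [Finset.mem_filter] at ht
    exact Finset.mem_Icc.mpr ⟨hK1 t ht.1, ht.2⟩
  have := Finset.card_le_card h
  rw [Nat.card_Icc] at this
  unfold cB
  omega

lemma cB_add (K : Finset ℕ) (a : ℕ) : ∀ m, cB K (a + m) ≤ cB K a + m := by
  intro m
  induction m with
  | zero => simp
  | succ m ih =>
    have h := cB_succ K (a + m)
    have : a + (m + 1) = (a + m) + 1 := by omega
    rw [this, h]
    split <;> omega

/-- The block index of the (1-based) letter `a`. -/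
def blkK (K : Finset ℕ) (a : ℕ) : ℕ := a - cB K a

lemma blkK_mono {K : Finset ℕ} (hK1 : ∀ k ∈ K, 1 ≤ k) {a b : ℕ} (h : a ≤ b) :
    blkK K a ≤ blkK K b := by
  have h1 := cB_add K a (b - a)
  rw [Nat.add_sub_cancel' h] at h1
  have h2 := cB_le hK1 a
  have h3 := cB_le hK1 b
  unfold blkK
  omega

lemma blkK_lt {K : Finset ℕ} (hK1 : ∀ k ∈ K, 1 ≤ k) {a b : ℕ}
    (h : blkK K a < blkK K b) : a < b := by
  by_contra hc
  push_neg at hc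
  have := blkK_mono hK1 hc
  omega

lemma blkK_succ_iff {K : Finset ℕ} (hK1 : ∀ k ∈ K, 1 ≤ k) (a : ℕ) :
    blkK K a = blkK K (a + 1) ↔ (a + 1) ∈ K := by
  have h1 := cB_succ K a
  have h2 := cB_le hK1 a
  have h3 := cB_le hK1 (a + 1)
  by_cases hm : a + 1 ∈ K
  · simp only [hm, if_pos] at h1
    constructor
    · intro _; exact hm
    · intro _; unfold blkK; omega
  · simp only [hm, if_neg, not_false_iff] at h1
    constructor
    · intro hEq; exfalso; unfold blkK at hEq; omega
    · intro h; exact absurd h hm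
lemma ol_lt (n : ℕ) (w : Equiv.Perm (Fin n)) {x : ℕ} (h : x < n) :
    ol n w x = (w ⟨x, h⟩ : ℕ) := dif_pos h

lemma mem_DesSet (n : ℕ) (w : Equiv.Perm (Fin n)) (i : ℕ) :
    i ∈ DesSet n w ↔ i < n - 1 ∧ ol n w (i + 1) < ol n w i := by
  simp [DesSet, Finset.mem_filter, Finset.mem_range]

/-- The block index of the letter at position `x` of `u` ("class word"). -/
def Wd (n : ℕ) (K : Finset ℕ) (u : Equiv.Perm (Fin n)) (x : ℕ) : ℕ :=
  blkK K (ol n u x)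

/-- Position `x` is the end of its chunk. -/
def stopP (n : ℕ) (K : Finset ℕ) (u : Equiv.Perm (Fin n)) (x : ℕ) : Prop :=
  n - 1 ≤ x ∨ Wd n K u (x + 1) ≠ Wd n K u x ∨ x ∉ DesSet n u

lemma stop_ex (n : ℕ) (K : Finset ℕ) (u : Equiv.Perm (Fin n)) (i : ℕ) :
    ∃ x, i ≤ x ∧ stopP n K u x :=
  ⟨max i (n - 1), le_max_left _ _, Or.inl (le_max_right _ _)⟩

/-- The end of the chunk containing position `i`. -/
noncomputable def estop (n : ℕ) (K : Finset ℕ) (u : Equiv.Perm (Fin n)) (i : ℕ) : ℕ :=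
  Nat.find (stop_ex n K u i)

lemma le_estop (n : ℕ) (K : Finset ℕ) (u : Equiv.Perm (Fin n)) (i : ℕ) :
    i ≤ estop n K u i := (Nat.find_spec (stop_ex n K u i)).1

lemma stop_estop (n : ℕ) (K : Finset ℕ) (u : Equiv.Perm (Fin n)) (i : ℕ) :
    stopP n K u (estop n K u i) := (Nat.find_spec (stop_ex n K u i)).2

lemma estop_min (n : ℕ) (K : Finset ℕ) (u : Equiv.Perm (Fin n)) {i x : ℕ}
    (h1 : i ≤ x) (h2 : x < estop n K u i) : ¬ stopP n K u x := by
  intro hs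
  exact Nat.find_min (stop_ex n K u i) h2 ⟨h1, hs⟩

lemma estop_le (n : ℕ) (K : Finset ℕ) (u : Equiv.Perm (Fin n)) {i x : ℕ}
    (h1 : i ≤ x) (h2 : stopP n K u x) : estop n K u i ≤ x :=
  Nat.find_min' (stop_ex n K u i) ⟨h1, h2⟩

lemma estop_mono (n : ℕ) (K : Finset ℕ) (u : Equiv.Perm (Fin n)) {i j : ℕ}
    (h : i ≤ j) : estop n K u i ≤ estop n K u j :=
  estop_le n K u (le_trans h (le_estop n K u j)) (stop_estop n K u j)

lemma estop_of_not_stop (n : ℕ) (K : Finset ℕ) (u : Equiv.Perm (Fin n)) {i : ℕ}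
    (h : ¬ stopP n K u i) : estop n K u i = estop n K u (i + 1) := by
  apply le_antisymm
  · exact estop_le n K u (le_trans (Nat.le_succ i) (le_estop n K u (i+1)))
      (stop_estop n K u (i+1))
  · apply estop_le n K u _ (stop_estop n K u i)
    have h1 := le_estop n K u i
    rcases Nat.eq_or_lt_of_le h1 with h2 | h2
    · exfalso; apply h; have := stop_estop n K u i; rw [← h2] at this; exact this
    · omega

lemma estop_of_stop (n : ℕ) (K : Finset ℕ) (u : Equiv.Perm (Fin n)) {i : ℕ}
    (h : stopP n K u i) : estop n K u i = i :=
  le_antisymm (estop_le n K u le_rfl h) (le_estop n K u i)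

/-- The strict comparison of the lexicographic keys of positions `i`, `j`. -/
def klt (n : ℕ) (K : Finset ℕ) (u : Equiv.Perm (Fin n)) (i j : Fin n) : Prop :=
  Wd n K u i < Wd n K u j ∨
    (Wd n K u i = Wd n K u j ∧
      (estop n K u i < estop n K u j ∨
        (estop n K u i = estop n K u j ∧ (j : ℕ) < (i : ℕ))))

lemma klt_irrefl (n : ℕ) (K : Finset ℕ) (u : Equiv.Perm (Fin n)) (i : Fin n) :
    ¬ klt n K u i i := by
  unfold klt; omega

lemma klt_trans (n : ℕ) (K : Finset ℕ) (u : Equiv.Perm (Fin n)) {i j k : Fin n}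
    (h1 : klt n K u i j) (h2 : klt n K u j k) : klt n K u i k := by
  unfold klt at *; omega

lemma klt_total (n : ℕ) (K : Finset ℕ) (u : Equiv.Perm (Fin n)) {i j : Fin n}
    (h : i ≠ j) : klt n K u i j ∨ klt n K u j i := by
  have hv : (i : ℕ) ≠ (j : ℕ) := fun hc => h (Fin.ext hc)
  unfold klt; omega

lemma klt_asymm (n : ℕ) (K : Finset ℕ) (u : Equiv.Perm (Fin n)) {i j : Fin n}
    (h : klt n K u i j) : ¬ klt n K u j i := by
  unfold klt at *; omega

lemma klt_inj (n : ℕ) (K : Finset ℕ) (u : Equiv.Perm (Fin n)) {i j : Fin n}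
    (h1 : ¬ klt n K u i j) (h2 : ¬ klt n K u j i) : i = j := by
  by_contra h
  rcases klt_total n K u h with h' | h' <;> tauto

/-- The rank of position `i` in the key order. -/
noncomputable def rnk (n : ℕ) (K : Finset ℕ) (u : Equiv.Perm (Fin n)) (i : Fin n) : ℕ :=
  (Finset.univ.filter fun j => klt n K u j i).card

lemma rnk_lt (n : ℕ) (K : Finset ℕ) (u : Equiv.Perm (Fin n)) (hn : 1 ≤ n) (i : Fin n) :
    rnk n K u i < n := by
  have h : (Finset.univ.filter fun j => klt n K u j i) ⊆ Finset.univ.erase i := by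
    intro j hj
    simp only [Finset.mem_filter] at hj
    apply Finset.mem_erase.mpr
    refine ⟨?_, Finset.mem_univ _⟩
    intro hc; rw [hc] at hj; exact klt_irrefl n K u i hj.2
  have := Finset.card_le_card h
  rw [Finset.card_erase_of_mem (Finset.mem_univ i), Finset.card_univ, Fintype.card_fin] at this
  unfold rnk
  omega

lemma rnk_strict (n : ℕ) (K : Finset ℕ) (u : Equiv.Perm (Fin n)) {i j : Fin n}
    (h : klt n K u i j) : rnk n K u i < rnk n K u j := by
  apply Finset.card_lt_card
  constructor
  · intro x hx
    simp only [Finset.mem_filter, Finset.mem_univ, true_and] at hx ⊢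
    exact klt_trans n K u hx h
  · intro hc
    have hi : i ∈ Finset.univ.filter fun x => klt n K u x j := by
      simp only [Finset.mem_filter, Finset.mem_univ, true_and]; exact h
    have := hc hi
    simp only [Finset.mem_filter, Finset.mem_univ, true_and] at this
    exact klt_irrefl n K u i this

lemma klt_iff_rnk (n : ℕ) (K : Finset ℕ) (u : Equiv.Perm (Fin n)) {i j : Fin n} :
    klt n K u i j ↔ rnk n K u i < rnk n K u j := by
  constructor
  · exact rnk_strict n K u
  · intro h
    by_contra hc
    rcases eq_or_ne i j with rfl | hne
    · omega
    · rcases klt_total n K u hne with h' | h'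
      · exact hc h'
      · have := rnk_strict n K u h'; omega

/-- The rebuilt permutation from the data of `u`. -/
noncomputable def bperm (n : ℕ) (K : Finset ℕ) (hn : 1 ≤ n) (u : Equiv.Perm (Fin n)) :
    Equiv.Perm (Fin n) :=
  Equiv.ofBijective (fun i => (⟨rnk n K u i, rnk_lt n K u hn i⟩ : Fin n))
    (Finite.injective_iff_bijective.mp (by
      intro i j hij
      have : rnk n K u i = rnk n K u j := by
        have := congrArg Fin.val hij
        simpa using this
      by_contra hne
      rcases klt_total n K u hne with h | h <;>
        · have := rnk_strict n K u h; omega))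

lemma bperm_apply (n : ℕ) (K : Finset ℕ) (hn : 1 ≤ n) (u : Equiv.Perm (Fin n)) (i : Fin n) :
    (bperm n K hn u i : ℕ) = rnk n K u i := rfl
lemma count_comp (n : ℕ) (u : Equiv.Perm (Fin n)) (p : ℕ → Prop) [DecidablePred p] :
    (Finset.univ.filter fun j : Fin n => p ((u j : Fin n) : ℕ)).card =
      ((Finset.range n).filter p).card := by
  rw [Finset.card_filter, Finset.card_filter]
  have h1 : (∑ j : Fin n, if p ((u j : Fin n) : ℕ) then 1 else 0) =
      ∑ j : Fin n, (fun a : Fin n => if p (a : ℕ) then 1 else 0) (u j) := rfl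
  rw [h1, Equiv.sum_comp u (fun a : Fin n => if p (a : ℕ) then (1:ℕ) else 0)]
  exact Fin.sum_univ_eq_sum_range (fun a => if p a then 1 else 0) n

lemma dc_mem_iff {n : ℕ} {S : Finset ℕ} (hS : ∀ a ∈ S, a < n)
    (dc : ∀ a ∈ S, ∀ b, b ≤ a → b ∈ S) {x : ℕ} (hx : x < n) :
    x ∈ S ↔ x < S.card := by
  constructor
  · intro hmem
    have h : Finset.range (x + 1) ⊆ S := by
      intro b hb
      rw [Finset.mem_range] at hb
      exact dc x hmem b (by omega)
    have := Finset.card_le_card h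
    rw [Finset.card_range] at this
    omega
  · intro hcard
    by_contra hmem
    have h : S ⊆ Finset.range x := by
      intro y hy
      rw [Finset.mem_range]
      by_contra hge
      exact hmem (dc y hy x (by omega))
    have := Finset.card_le_card h
    rw [Finset.card_range] at this
    omega

lemma ol_coe (n : ℕ) (u : Equiv.Perm (Fin n)) (j : Fin n) :
    ol n u (j : ℕ) = ((u j : Fin n) : ℕ) := by
  rw [ol_lt n u j.2]

lemma Wd_coe (n : ℕ) (K : Finset ℕ) (u : Equiv.Perm (Fin n)) (j : Fin n) :
    Wd n K u (j : ℕ) = blkK K ((u j : Fin n) : ℕ) := by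
  unfold Wd; rw [ol_coe]

lemma blk_bperm (n : ℕ) (K : Finset ℕ) (hn : 1 ≤ n) (hK1 : ∀ k ∈ K, 1 ≤ k)
    (u : Equiv.Perm (Fin n)) (i : Fin n) :
    blkK K (rnk n K u i) = Wd n K u i := by
  classical
  set c := Wd n K u (i : ℕ) with hc
  set A := Finset.univ.filter (fun j : Fin n => Wd n K u (j : ℕ) < c) with hA
  set B := Finset.univ.filter
    (fun j : Fin n => Wd n K u (j : ℕ) = c ∧ klt n K u j i) with hB
  have hsplit : Finset.univ.filter (fun j : Fin n => klt n K u j i) = A ∪ B := by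
    ext j
    simp only [hA, hB, Finset.mem_filter, Finset.mem_univ, true_and, Finset.mem_union]
    constructor
    · intro h
      have h' := h
      unfold klt at h'
      rcases h' with hlt | ⟨heq, _⟩
      · exact Or.inl hlt
      · exact Or.inr ⟨heq, h⟩
    · rintro (h | ⟨_, h⟩)
      · unfold klt; exact Or.inl h
      · exact h
  have hdisj : Disjoint A B := by
    rw [Finset.disjoint_left]
    intro j hj hj'
    simp only [hA, hB, Finset.mem_filter, Finset.mem_univ, true_and] at hj hj'
    omega
  have hrnk : rnk n K u i = A.card + B.card := by
    unfold rnk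
    rw [hsplit, Finset.card_union_of_disjoint hdisj]
  set tlow := ((Finset.range n).filter fun a => blkK K a < c).card with htlow
  set q := ((Finset.range n).filter fun a => blkK K a = c).card with hq
  have hAcard : A.card = tlow := by
    have h1 : A = Finset.univ.filter (fun j : Fin n => blkK K ((u j : Fin n) : ℕ) < c) := by
      apply Finset.filter_congr
      intro j _
      rw [Wd_coe]
    rw [h1, htlow]
    exact count_comp n u (fun a => blkK K a < c)
  have hCcard : (Finset.univ.filter fun j : Fin n => Wd n K u (j : ℕ) = c).card = q := by
    have h1 : (Finset.univ.filter fun j : Fin n => Wd n K u (j : ℕ) = c)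
        = Finset.univ.filter (fun j : Fin n => blkK K ((u j : Fin n) : ℕ) = c) := by
      apply Finset.filter_congr
      intro j _
      rw [Wd_coe]
    rw [h1, hq]
    exact count_comp n u (fun a => blkK K a = c)
  have hBlt : B.card < q := by
    rw [← hCcard]
    apply Finset.card_lt_card
    constructor
    · intro j hj
      simp only [hB, Finset.mem_filter, Finset.mem_univ, true_and] at hj ⊢
      exact hj.1
    · intro hsub
      have hiC : i ∈ Finset.univ.filter fun j : Fin n => Wd n K u (j : ℕ) = c := by
        simp only [Finset.mem_filter, Finset.mem_univ, true_and, hc]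
      have h2 := (Finset.mem_filter.mp (hsub hiC)).2
      exact klt_irrefl n K u i h2.2
  have hm : rnk n K u i < n := rnk_lt n K u hn i
  set m := rnk n K u i with hmdef
  -- down-closedness facts
  have hS1dc : ∀ a ∈ (Finset.range n).filter (fun a => blkK K a < c),
      ∀ b, b ≤ a → b ∈ (Finset.range n).filter (fun a => blkK K a < c) := by
    intro a ha b hba
    simp only [Finset.mem_filter, Finset.mem_range] at ha ⊢
    exact ⟨by omega, lt_of_le_of_lt (blkK_mono hK1 hba) ha.2⟩
  have hS1b : ∀ a ∈ (Finset.range n).filter (fun a => blkK K a < c), a < n := by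
    intro a ha; simp only [Finset.mem_filter, Finset.mem_range] at ha; exact ha.1
  have hS2dc : ∀ a ∈ (Finset.range n).filter (fun a => blkK K a ≤ c),
      ∀ b, b ≤ a → b ∈ (Finset.range n).filter (fun a => blkK K a ≤ c) := by
    intro a ha b hba
    simp only [Finset.mem_filter, Finset.mem_range] at ha ⊢
    exact ⟨by omega, le_trans (blkK_mono hK1 hba) ha.2⟩
  have hS2b : ∀ a ∈ (Finset.range n).filter (fun a => blkK K a ≤ c), a < n := by
    intro a ha; simp only [Finset.mem_filter, Finset.mem_range] at ha; exact ha.1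
  have hS2card : ((Finset.range n).filter (fun a => blkK K a ≤ c)).card = tlow + q := by
    have hsplit2 : (Finset.range n).filter (fun a => blkK K a ≤ c)
        = ((Finset.range n).filter (fun a => blkK K a < c))
          ∪ ((Finset.range n).filter (fun a => blkK K a = c)) := by
      ext a
      simp only [Finset.mem_filter, Finset.mem_range, Finset.mem_union]
      omega
    rw [hsplit2, Finset.card_union_of_disjoint]
    rw [Finset.disjoint_left]
    intro a ha ha'
    simp only [Finset.mem_filter, Finset.mem_range] at ha ha'
    omega
  rcases lt_trichotomy (blkK K m) c with hlt | heq | hgt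
  · exfalso
    have hmem : m ∈ (Finset.range n).filter (fun a => blkK K a < c) := by
      simp only [Finset.mem_filter, Finset.mem_range]
      exact ⟨hm, hlt⟩
    rw [dc_mem_iff hS1b hS1dc hm] at hmem
    rw [← htlow] at hmem
    omega
  · exact heq
  · exfalso
    have hmem : m ∉ (Finset.range n).filter (fun a => blkK K a ≤ c) := by
      simp only [Finset.mem_filter, Finset.mem_range]
      intro h
      omega
    rw [dc_mem_iff hS2b hS2dc hm, hS2card] at hmem
    omega
lemma klt_succ_iff (n : ℕ) (K : Finset ℕ) (hK1 : ∀ k ∈ K, 1 ≤ k)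
    (u : Equiv.Perm (Fin n)) {i : ℕ} (h1 : i < n - 1) :
    klt n K u ⟨i + 1, by omega⟩ ⟨i, by omega⟩ ↔ ol n u (i + 1) < ol n u i := by
  have hWi : Wd n K u ((⟨i, by omega⟩ : Fin n) : ℕ) = blkK K (ol n u i) := rfl
  have hWi1 : Wd n K u ((⟨i + 1, by omega⟩ : Fin n) : ℕ) = blkK K (ol n u (i + 1)) := rfl
  rcases lt_trichotomy (blkK K (ol n u (i + 1))) (blkK K (ol n u i)) with hW | hW | hW
  · constructor
    · intro _; exact blkK_lt hK1 hW
    · intro _; unfold klt; rw [hWi, hWi1]; exact Or.inl hW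
  · -- same block: split on membership in descent set
    by_cases hD : i ∈ DesSet n u
    · have hol : ol n u (i + 1) < ol n u i := ((mem_DesSet n u i).mp hD).2
      constructor
      · intro _; exact hol
      · intro _
        have hns : ¬ stopP n K u i := by
          unfold stopP
          push_neg
          refine ⟨by omega, ?_, hD⟩
          show Wd n K u (i + 1) = Wd n K u i
          unfold Wd; omega
        have hE := estop_of_not_stop n K u hns
        unfold klt
        rw [hWi, hWi1]
        exact Or.inr ⟨hW, Or.inr ⟨by rw [← hE], by simp⟩⟩
    · have hol : ¬ ol n u (i + 1) < ol n u i := by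
        intro hc
        exact hD ((mem_DesSet n u i).mpr ⟨h1, hc⟩)
      constructor
      · intro hk
        exfalso
        have hs : stopP n K u i := Or.inr (Or.inr hD)
        have hEi : estop n K u i = i := estop_of_stop n K u hs
        have hEi1 : i + 1 ≤ estop n K u (i + 1) := le_estop n K u (i + 1)
        unfold klt at hk
        rw [hWi, hWi1] at hk
        simp only [Fin.val_mk] at hk
        omega
      · intro hc; exact absurd hc hol
  · constructor
    · intro hk
      exfalso
      unfold klt at hk
      rw [hWi, hWi1] at hk
      omega
    · intro hc
      exfalso
      have := blkK_mono hK1 (le_of_lt hc)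
      omega

lemma desSet_bperm (n : ℕ) (K : Finset ℕ) (hn : 1 ≤ n) (hK1 : ∀ k ∈ K, 1 ≤ k)
    (u : Equiv.Perm (Fin n)) :
    DesSet n (bperm n K hn u) = DesSet n u := by
  ext i
  rw [mem_DesSet, mem_DesSet]
  constructor
  · rintro ⟨h1, h2⟩
    refine ⟨h1, ?_⟩
    rw [← klt_succ_iff n K hK1 u h1]
    rw [ol_lt n (bperm n K hn u) (show i + 1 < n by omega),
        ol_lt n (bperm n K hn u) (show i < n by omega)] at h2
    rw [klt_iff_rnk]
    exact h2
  · rintro ⟨h1, h2⟩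
    refine ⟨h1, ?_⟩
    rw [← klt_succ_iff n K hK1 u h1] at h2
    rw [ol_lt n (bperm n K hn u) (show i + 1 < n by omega),
        ol_lt n (bperm n K hn u) (show i < n by omega)]
    rw [klt_iff_rnk] at h2
    exact h2

lemma mem_Wset (n : ℕ) (K : Finset ℕ) (v : Equiv.Perm (Fin n)) :
    v ∈ Wset n K ↔ ∀ k ∈ K, ∀ hk : k < n,
      ((v⁻¹ (⟨k - 1, lt_of_le_of_lt (Nat.sub_le k 1) hk⟩ : Fin n) : Fin n) : ℕ) ≤
        ((v⁻¹ (⟨k, hk⟩ : Fin n) : Fin n) : ℕ) + 1 := by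
  unfold Wset
  simp only [Finset.mem_filter, Finset.mem_univ, true_and]

lemma bperm_mem_Wset (n : ℕ) (K : Finset ℕ) (hn : 1 ≤ n)
    (hK : ∀ k ∈ K, 1 ≤ k ∧ k ≤ n - 1) (u : Equiv.Perm (Fin n)) :
    bperm n K hn u ∈ Wset n K := by
  have hK1 : ∀ k ∈ K, 1 ≤ k := fun k hk => (hK k hk).1
  rw [mem_Wset]
  intro k hkK hkn
  set v' := bperm n K hn u with hv'
  set i := v'⁻¹ (⟨k - 1, lt_of_le_of_lt (Nat.sub_le k 1) hkn⟩ : Fin n) with hi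
  set i' := v'⁻¹ (⟨k, hkn⟩ : Fin n) with hi'
  have hk1 : 1 ≤ k := hK1 k hkK
  have hvi : (v' i : ℕ) = k - 1 := by rw [hi]; exact congrArg Fin.val (Equiv.apply_symm_apply _ _)
  have hvi' : (v' i' : ℕ) = k := by rw [hi']; exact congrArg Fin.val (Equiv.apply_symm_apply _ _)
  have hri : rnk n K u i = k - 1 := by rw [← bperm_apply n K hn u i]; exact hvi
  have hri' : rnk n K u i' = k := by rw [← bperm_apply n K hn u i']; exact hvi'
  have hWi : Wd n K u (i : ℕ) = blkK K (k - 1) := by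
    rw [← blk_bperm n K hn hK1 u i, hri]
  have hWi' : Wd n K u (i' : ℕ) = blkK K k := by
    rw [← blk_bperm n K hn hK1 u i', hri']
  have hblk : blkK K (k - 1) = blkK K k := by
    have h := (blkK_succ_iff hK1 (k - 1)).mpr
    have e : k - 1 + 1 = k := by omega
    rw [e] at h
    exact h hkK
  have hWW : Wd n K u (i : ℕ) = Wd n K u (i' : ℕ) := by rw [hWi, hWi', hblk]
  have hklt : klt n K u i i' := by
    rw [klt_iff_rnk, hri, hri']
    omega
  by_contra hcon
  push_neg at hcon
  have hii' : (i' : ℕ) + 2 ≤ (i : ℕ) := hcon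
  have hin : (i : ℕ) < n := i.2
  by_cases hstop : stopP n K u ((i : ℕ) - 1)
  · -- i is a chunk start; derive contradiction from klt i i'
    have h2 := hklt
    unfold klt at h2
    rcases h2 with h2 | ⟨_, h2⟩
    · omega
    rcases h2 with h2 | ⟨h2, h3⟩
    · -- estop i < estop i' and i' < i : stop-free interval contains estop i
      have hile : (i' : ℕ) ≤ estop n K u (i : ℕ) := le_trans (by omega) (le_estop n K u _)
      have := estop_min n K u hile h2
      exact this (stop_estop n K u _)
    · -- estop i = estop i' and i' < i : position i-1 is not a stop
      have h4 : (i' : ℕ) ≤ (i : ℕ) - 1 := by omega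
      have h5 : (i : ℕ) - 1 < estop n K u (i' : ℕ) := by
        have := le_estop n K u (i : ℕ)
        omega
      exact (estop_min n K u h4 h5) hstop
  · -- i is glued to i-1
    unfold stopP at hstop
    push_neg at hstop
    obtain ⟨hs1, hs2, hs3⟩ := hstop
    have hi2 : 2 ≤ (i : ℕ) := by omega
    have e1 : (i : ℕ) - 1 + 1 = (i : ℕ) := by omega
    rw [e1] at hs2
    set im1 : Fin n := ⟨(i : ℕ) - 1, by omega⟩ with him1
    have hWm : Wd n K u ((im1 : Fin n) : ℕ) = Wd n K u (i : ℕ) := by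
      rw [him1]; exact hs2.symm
    have hEm : estop n K u ((im1 : Fin n) : ℕ) = estop n K u (i : ℕ) := by
      have hns : ¬ stopP n K u ((i : ℕ) - 1) := by
        unfold stopP; push_neg; exact ⟨hs1, by rw [e1]; exact hs2, hs3⟩
      have := estop_of_not_stop n K u hns
      rw [e1] at this
      exact this
    have hsub : ∀ j : Fin n, klt n K u j im1 → klt n K u j i ∨ j = i := by
      intro j hj
      unfold klt at hj ⊢
      rw [hWm, hEm] at hj
      rcases hj with hj | ⟨hje, hj⟩
      · exact Or.inl (Or.inl hj)
      rcases hj with hj | ⟨hje2, hj⟩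
      · exact Or.inl (Or.inr ⟨hje, Or.inl hj⟩)
      · -- (im1 : ℕ) < j, i.e. i - 1 < j
        have hj' : (i : ℕ) - 1 < (j : ℕ) := hj
        by_cases hji : (j : ℕ) = (i : ℕ)
        · exact Or.inr (Fin.ext hji)
        · have : (i : ℕ) < (j : ℕ) := by omega
          exact Or.inl (Or.inr ⟨hje, Or.inr ⟨hje2, this⟩⟩)
    have hcard : rnk n K u im1 ≤ rnk n K u i + 1 := by
      unfold rnk
      have hss : Finset.univ.filter (fun j => klt n K u j im1) ⊆
          insert i (Finset.univ.filter (fun j => klt n K u j i)) := by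
        intro j hj
        simp only [Finset.mem_filter, Finset.mem_univ, true_and] at hj
        rcases hsub j hj with h | h
        · exact Finset.mem_insert.mpr (Or.inr (by
            simp only [Finset.mem_filter, Finset.mem_univ, true_and]; exact h))
        · exact Finset.mem_insert.mpr (Or.inl h)
      calc (Finset.univ.filter (fun j => klt n K u j im1)).card
          ≤ (insert i (Finset.univ.filter (fun j => klt n K u j i))).card :=
            Finset.card_le_card hss
        _ ≤ (Finset.univ.filter (fun j => klt n K u j i)).card + 1 :=
            Finset.card_insert_le _ _
    have hklt2 : klt n K u i im1 := by
      unfold klt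
      rw [hWm, hEm]
      refine Or.inr ⟨rfl, Or.inr ⟨rfl, ?_⟩⟩
      show (i : ℕ) - 1 < (i : ℕ)
      omega
    have hlt2 := rnk_strict n K u hklt2
    have : rnk n K u im1 = rnk n K u i' := by omega
    have him : im1 = i' := by
      apply klt_inj n K u
      · rw [klt_iff_rnk]; omega
      · rw [klt_iff_rnk]; omega
    have : (i' : ℕ) = (i : ℕ) - 1 := by rw [← him]
    omega

lemma desc_run (n : ℕ) (K : Finset ℕ) (u : Equiv.Perm (Fin n)) (p : ℕ) :
    ∀ d, p + d ≤ estop n K u p → ol n u (p + d) + d ≤ ol n u p := by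
  intro d
  induction d with
  | zero => simp
  | succ d ih =>
    intro hle
    have h1 : p + d < estop n K u p := by omega
    have h2 : ¬ stopP n K u (p + d) := estop_min n K u (by omega) h1
    unfold stopP at h2
    push_neg at h2
    have h3 := ((mem_DesSet n u (p + d)).mp h2.2.2).2
    have h4 := ih (by omega)
    have e : p + (d + 1) = (p + d) + 1 := by omega
    rw [e]
    omega

lemma klt_letter_succ (n : ℕ) (K : Finset ℕ) (hK1 : ∀ k ∈ K, 1 ≤ k)
    {v : Equiv.Perm (Fin n)} (hv : v ∈ Wset n K) {a : ℕ} (ha : a + 1 < n)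
    (hblk : blkK K a = blkK K (a + 1)) :
    klt n K v (v⁻¹ ⟨a, by omega⟩) (v⁻¹ ⟨a + 1, ha⟩) := by
  have hmem : (a + 1) ∈ K := (blkK_succ_iff hK1 a).mp hblk
  set p := v⁻¹ (⟨a, by omega⟩ : Fin n) with hp
  set q := v⁻¹ (⟨a + 1, ha⟩ : Fin n) with hq
  have hvp : (v p : ℕ) = a := by rw [hp]; exact congrArg Fin.val (Equiv.apply_symm_apply _ _)
  have hvq : (v q : ℕ) = a + 1 := by rw [hq]; exact congrArg Fin.val (Equiv.apply_symm_apply _ _)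
  have hWp : Wd n K v (p : ℕ) = blkK K a := by rw [Wd_coe, hvp]
  have hWq : Wd n K v (q : ℕ) = blkK K (a + 1) := by rw [Wd_coe, hvq]
  have hcond := (mem_Wset n K v).mp hv (a + 1) hmem ha
  have hcond' : (p : ℕ) ≤ (q : ℕ) + 1 := by
    have e : a + 1 - 1 = a := by omega
    convert hcond using 3
    exact Fin.ext e.symm
  have hne : p ≠ q := by
    intro hc
    rw [hc] at hvp
    omega
  by_cases hpq : (p : ℕ) = (q : ℕ) + 1
  · -- a immediately after a+1 : same chunk
    have hqn : (q : ℕ) < n - 1 := by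
      have := p.2
      omega
    have holq : ol n v (q : ℕ) = a + 1 := by rw [ol_coe n v q, hvq]
    have holq1 : ol n v ((q : ℕ) + 1) = a := by
      rw [← hpq, ol_coe n v p, hvp]
    have hns : ¬ stopP n K v (q : ℕ) := by
      unfold stopP
      push_neg
      refine ⟨by omega, ?_, ?_⟩
      · show Wd n K v ((q : ℕ) + 1) = Wd n K v (q : ℕ)
        unfold Wd
        rw [holq, holq1]
        omega
      · exact (mem_DesSet n v (q : ℕ)).mpr ⟨hqn, by omega⟩
    have hE := estop_of_not_stop n K v hns
    unfold klt
    rw [hWp, hWq]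
    refine Or.inr ⟨hblk, Or.inr ⟨?_, by omega⟩⟩
    rw [hE, hpq]
  · have hplt : (p : ℕ) < (q : ℕ) := by
      have : (p : ℕ) ≠ (q : ℕ) := fun hc => hne (Fin.ext hc)
      omega
    have hEm : estop n K v (p : ℕ) ≤ estop n K v (q : ℕ) := estop_mono n K v (by omega)
    rcases eq_or_lt_of_le hEm with hEe | hElt
    · exfalso
      have hle : (p : ℕ) + ((q : ℕ) - p) ≤ estop n K v (p : ℕ) := by
        have := le_estop n K v (q : ℕ)
        omega
      have := desc_run n K v (p : ℕ) ((q : ℕ) - p) hle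
      have e : (p : ℕ) + ((q : ℕ) - p) = (q : ℕ) := by omega
      rw [e] at this
      rw [ol_coe n v q, ol_coe n v p, hvq, hvp] at this
      omega
    · unfold klt
      rw [hWp, hWq]
      exact Or.inr ⟨hblk, Or.inl hElt⟩

lemma klt_of_letter_lt (n : ℕ) (K : Finset ℕ) (hK1 : ∀ k ∈ K, 1 ≤ k)
    {v : Equiv.Perm (Fin n)} (hv : v ∈ Wset n K) {i j : Fin n}
    (h : (v i : ℕ) < (v j : ℕ)) : klt n K v i j := by
  have key : ∀ (d a : ℕ) (_hd : 1 ≤ d) (hlt : a + d < n)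
      (_hb : blkK K a = blkK K (a + d)),
      klt n K v (v⁻¹ ⟨a, by omega⟩) (v⁻¹ ⟨a + d, by omega⟩) := by
    intro d
    induction d with
    | zero => intro a h _ _; exact absurd h (by omega)
    | succ d ih =>
      intro a _ hlt hblk
      by_cases hd0 : d = 0
      · subst hd0
        have h1 : a + 1 < n := by omega
        have h2 : blkK K a = blkK K (a + 1) := hblk
        exact klt_letter_succ n K hK1 hv h1 h2
      · have hd1 : 1 ≤ d := by omega
        have hble : blkK K a ≤ blkK K (a + d) := blkK_mono hK1 (by omega)
        have hble2 : blkK K (a + d) ≤ blkK K (a + (d + 1)) := blkK_mono hK1 (by omega)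
        have hbeq : blkK K a = blkK K (a + d) := by omega
        have hbeq2 : blkK K (a + d) = blkK K (a + d + 1) := by
          have hblk' : blkK K a = blkK K (a + d + 1) := hblk
          omega
        have k1 := ih a hd1 (by omega) hbeq
        have k2 := klt_letter_succ n K hK1 hv (a := a + d) (by omega) hbeq2
        exact klt_trans n K v k1 k2
  rcases lt_trichotomy (blkK K (v i : ℕ)) (blkK K (v j : ℕ)) with hb | hb | hb
  · unfold klt
    rw [Wd_coe, Wd_coe]
    exact Or.inl hb
  · set a := (v i : ℕ) with hadef
    set b := (v j : ℕ) with hbdef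
    have hbn : b < n := (v j).2
    have hd : 1 ≤ b - a := by omega
    have he : a + (b - a) = b := by omega
    have hk := key (b - a) a hd (by omega) (by rw [he]; exact hb)
    have e1 : v⁻¹ (⟨a, by omega⟩ : Fin n) = i := by
      have : (⟨a, by omega⟩ : Fin n) = v i := Fin.ext (by simp [hadef])
      rw [this]; exact Equiv.symm_apply_apply v i
    have e2 : v⁻¹ (⟨a + (b - a), by omega⟩ : Fin n) = j := by
      have : (⟨a + (b - a), by omega⟩ : Fin n) = v j := Fin.ext (by simp only [Fin.val_mk]; omega)
      rw [this]; exact Equiv.symm_apply_apply v j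
    rw [e1, e2] at hk
    exact hk
  · exfalso
    have := blkK_mono hK1 (le_of_lt h)
    omega

lemma bperm_id (n : ℕ) (K : Finset ℕ) (hn : 1 ≤ n) (hK1 : ∀ k ∈ K, 1 ≤ k)
    {v : Equiv.Perm (Fin n)} (hv : v ∈ Wset n K) : bperm n K hn v = v := by
  apply Equiv.ext
  intro i
  apply Fin.ext
  rw [bperm_apply]
  have hiff : ∀ j : Fin n, klt n K v j i ↔ (v j : ℕ) < (v i : ℕ) := by
    intro j
    constructor
    · intro hk
      by_contra hc
      push_neg at hc
      rcases eq_or_lt_of_le hc with hc | hc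
      · have : j = i := by
          apply v.injective
          exact Fin.ext hc.symm
        rw [this] at hk
        exact klt_irrefl n K v i hk
      · exact klt_asymm n K v (klt_of_letter_lt n K hK1 hv hc) hk
    · exact klt_of_letter_lt n K hK1 hv
  unfold rnk
  rw [Finset.filter_congr (fun j _ => by rw [hiff j])]
  have := count_comp n v (fun a => a < (v i : ℕ))
  rw [this]
  have hr : (Finset.range n).filter (fun a => a < (v i : ℕ)) = Finset.range (v i : ℕ) := by
    ext a
    simp only [Finset.mem_filter, Finset.mem_range]
    have := (v i).2
    omega
  rw [hr, Finset.card_range]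
lemma estop_congr (n : ℕ) (K : Finset ℕ) {u u' : Equiv.Perm (Fin n)}
    (hW : ∀ x, Wd n K u x = Wd n K u' x) (hD : DesSet n u = DesSet n u') (i : ℕ) :
    estop n K u i = estop n K u' i := by
  have hs : ∀ x, stopP n K u x ↔ stopP n K u' x := by
    intro x
    unfold stopP
    rw [hW, hW, hD]
  apply le_antisymm
  · exact estop_le n K u (le_estop n K u' i) ((hs _).mpr (stop_estop n K u' i))
  · exact estop_le n K u' (le_estop n K u i) ((hs _).mp (stop_estop n K u i))

lemma bperm_congr (n : ℕ) (K : Finset ℕ) (hn : 1 ≤ n) {u u' : Equiv.Perm (Fin n)}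
    (hW : ∀ x, Wd n K u x = Wd n K u' x) (hD : DesSet n u = DesSet n u') :
    bperm n K hn u = bperm n K hn u' := by
  have hk : ∀ i j : Fin n, klt n K u i j ↔ klt n K u' i j := by
    intro i j
    unfold klt
    rw [hW, hW, estop_congr n K hW hD, estop_congr n K hW hD]
  apply Equiv.ext
  intro i
  apply Fin.ext
  rw [bperm_apply, bperm_apply]
  unfold rnk
  congr 1
  apply Finset.filter_congr
  intro j _
  rw [hk]

lemma ol_rv (n : ℕ) (v : Equiv.Perm (Fin n)) {x : ℕ} (hx : x < n) :
    ol n (Fin.revPerm.trans v) x = ol n v (n - 1 - x) := by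
  rw [ol_lt n _ hx, ol_lt n v (show n - 1 - x < n by omega)]
  show ((v (Fin.revPerm ⟨x, hx⟩) : Fin n) : ℕ) = _
  congr 2
  apply Fin.ext
  rw [Fin.revPerm_apply, Fin.val_rev]
  simp only [Fin.val_mk]
  omega

lemma ol_ne (n : ℕ) (v : Equiv.Perm (Fin n)) {x y : ℕ} (hx : x < n) (hy : y < n)
    (hxy : x ≠ y) : ol n v x ≠ ol n v y := by
  rw [ol_lt n v hx, ol_lt n v hy]
  intro hc
  have h2 := v.injective (Fin.ext hc)
  have h3 := congrArg Fin.val h2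
  simp only [Fin.val_mk] at h3
  omega

lemma mem_DesSet_rv (n : ℕ) (v : Equiv.Perm (Fin n)) (i : ℕ) :
    i ∈ DesSet n (Fin.revPerm.trans v) ↔
      (i < n - 1 ∧ (n - 2 - i) ∉ DesSet n v) := by
  rw [mem_DesSet, mem_DesSet]
  by_cases h1 : i < n - 1
  · have e1 : ol n (Fin.revPerm.trans v) i = ol n v (n - 2 - i + 1) := by
      rw [ol_rv n v (show i < n by omega)]
      congr 1
      omega
    have e2 : ol n (Fin.revPerm.trans v) (i + 1) = ol n v (n - 2 - i) := by
      rw [ol_rv n v (show i + 1 < n by omega)]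
      congr 1
      omega
    have hne : ol n v (n - 2 - i) ≠ ol n v (n - 2 - i + 1) :=
      ol_ne n v (by omega) (by omega) (by omega)
    rw [e1, e2]
    constructor
    · rintro ⟨_, hlt⟩
      exact ⟨h1, fun hc => by omega⟩
    · rintro ⟨_, hnot⟩
      refine ⟨h1, ?_⟩
      by_contra hc
      push_neg at hc
      have h5 : ol n v (n - 2 - i) < ol n v (n - 2 - i + 1) := by omega
      exact hnot ⟨by omega, by omega⟩
  · constructor
    · rintro ⟨h, _⟩
      omega
    · rintro ⟨h, _⟩
      omega

lemma desSet_sub (n : ℕ) (v : Equiv.Perm (Fin n)) : DesSet n v ⊆ Finset.range (n - 1) :=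
  Finset.filter_subset _ _

lemma card_desSet_rv (n : ℕ) (v : Equiv.Perm (Fin n)) :
    (DesSet n (Fin.revPerm.trans v)).card = (n - 1) - (DesSet n v).card := by
  have h1 : DesSet n (Fin.revPerm.trans v) =
      (Finset.range (n - 1)).filter (fun i => (n - 2 - i) ∉ DesSet n v) := by
    ext i
    rw [mem_DesSet_rv]
    simp only [Finset.mem_filter, Finset.mem_range]
  rw [h1]
  have h2 : ((Finset.range (n - 1)).filter (fun i => (n - 2 - i) ∉ DesSet n v)).card =
      ((Finset.range (n - 1)).filter (fun j => j ∉ DesSet n v)).card := by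
    apply Finset.card_nbij' (fun i => n - 2 - i) (fun j => n - 2 - j)
    · intro a ha
      simp only [Finset.mem_coe, Finset.mem_filter, Finset.mem_range] at ha ⊢
      exact ⟨by omega, ha.2⟩
    · intro a ha
      simp only [Finset.mem_coe, Finset.mem_filter, Finset.mem_range] at ha ⊢
      refine ⟨by omega, ?_⟩
      have e : n - 2 - (n - 2 - a) = a := by omega
      rw [e]
      exact ha.2
    · intro a ha
      simp only [Finset.mem_coe, Finset.mem_filter, Finset.mem_range] at ha ⊢
      omega
    · intro a ha
      simp only [Finset.mem_coe, Finset.mem_filter, Finset.mem_range] at ha ⊢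
      omega
  rw [h2, Finset.filter_not, Finset.card_sdiff_of_subset (Finset.filter_subset _ _),
      Finset.card_range]
  congr 1
  have : (Finset.range (n - 1)).filter (fun j => j ∈ DesSet n v) = DesSet n v := by
    ext j
    simp only [Finset.mem_filter, Finset.mem_range]
    constructor
    · rintro ⟨_, h⟩; exact h
    · intro h
      exact ⟨Finset.mem_range.mp (desSet_sub n v h), h⟩
  rw [this]

/-- The involution. -/
noncomputable def Phi (n : ℕ) (K : Finset ℕ) (hn : 1 ≤ n) (v : Equiv.Perm (Fin n)) :
    Equiv.Perm (Fin n) :=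
  bperm n K hn (Fin.revPerm.trans v)

lemma Phi_mem (n : ℕ) (K : Finset ℕ) (hn : 1 ≤ n)
    (hK : ∀ k ∈ K, 1 ≤ k ∧ k ≤ n - 1) (v : Equiv.Perm (Fin n)) :
    Phi n K hn v ∈ Wset n K :=
  bperm_mem_Wset n K hn hK (Fin.revPerm.trans v)

lemma Phi_des (n : ℕ) (K : Finset ℕ) (hn : 1 ≤ n) (hK1 : ∀ k ∈ K, 1 ≤ k)
    (v : Equiv.Perm (Fin n)) :
    des n (Phi n K hn v) = (n - 1) - des n v := by
  unfold Phi des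
  rw [desSet_bperm n K hn hK1, card_desSet_rv]

lemma Phi_Phi (n : ℕ) (K : Finset ℕ) (hn : 1 ≤ n) (hK1 : ∀ k ∈ K, 1 ≤ k)
    {v : Equiv.Perm (Fin n)} (hv : v ∈ Wset n K) :
    Phi n K hn (Phi n K hn v) = v := by
  set u := Fin.revPerm.trans v with hu
  set v1 := bperm n K hn u with hv1
  have hW : ∀ x, Wd n K (Fin.revPerm.trans v1) x = Wd n K v x := by
    intro x
    by_cases hx : x < n
    · unfold Wd
      rw [ol_lt n _ hx, ol_lt n v hx]
      simp only [Equiv.trans_apply, Fin.revPerm_apply]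
      have h1 : blkK K ((v1 (⟨x, hx⟩ : Fin n).rev : Fin n) : ℕ)
          = Wd n K u (((⟨x, hx⟩ : Fin n).rev : Fin n) : ℕ) := by
        have := blk_bperm n K hn hK1 u ((⟨x, hx⟩ : Fin n).rev)
        rw [← bperm_apply n K hn u] at this
        exact this
      rw [h1, Wd_coe]
      have h2 : u ((⟨x, hx⟩ : Fin n).rev) = v ⟨x, hx⟩ := by
        rw [hu]
        simp only [Equiv.trans_apply, Fin.revPerm_apply, Fin.rev_rev]
      rw [h2]
    · unfold Wd ol
      rw [dif_neg hx, dif_neg hx]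
  have hD : DesSet n (Fin.revPerm.trans v1) = DesSet n v := by
    ext i
    rw [mem_DesSet_rv]
    have hDu : DesSet n v1 = DesSet n u := desSet_bperm n K hn hK1 u
    by_cases h1 : i < n - 1
    · have h2 : (n - 2 - i) ∈ DesSet n u ↔ i ∉ DesSet n v := by
        rw [hu, mem_DesSet_rv]
        have e : n - 2 - (n - 2 - i) = i := by omega
        rw [e]
        constructor
        · rintro ⟨_, h⟩; exact h
        · intro h; exact ⟨by omega, h⟩
      rw [hDu, h2]
      constructor
      · rintro ⟨_, h⟩
        by_contra hc
        exact h hc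
      · intro h
        refine ⟨h1, ?_⟩
        intro hc
        exact hc h
    · constructor
      · rintro ⟨h, _⟩; omega
      · intro h
        have := desSet_sub n v h
        rw [Finset.mem_range] at this
        omega
  show bperm n K hn (Fin.revPerm.trans v1) = v
  rw [bperm_congr n K hn hW hD]
  exact bperm_id n K hn hK1 hv
lemma coeff_sum_des (n : ℕ) (K : Finset ℕ) (j : ℕ) :
    (∑ v ∈ Wset n K, (X : Polynomial ℕ) ^ des n v).coeff j =
      ((Wset n K).filter (fun v => des n v = j)).card := by
  rw [Polynomial.finset_sum_coeff, Finset.card_filter]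
  apply Finset.sum_congr rfl
  intro v _
  rw [Polynomial.coeff_X_pow]
  by_cases h : des n v = j
  · simp [h]
  · have h2 : ¬ j = des n v := fun hc => h hc.symm
    simp [h, h2]

theorem hpoly_palindromic' (n : ℕ) (hn : 1 ≤ n) (K : Finset ℕ)
    (hK : ∀ k ∈ K, 1 ≤ k ∧ k ≤ n - 1) (i : ℕ) (hi : i ≤ n - 1) :
    (∑ v ∈ Wset n K, (X : Polynomial ℕ) ^ des n v).coeff i =
    (∑ v ∈ Wset n K, (X : Polynomial ℕ) ^ des n v).coeff (n - 1 - i) := by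
  have hK1 : ∀ k ∈ K, 1 ≤ k := fun k hk => (hK k hk).1
  rw [coeff_sum_des, coeff_sum_des]
  apply Finset.card_nbij' (fun v => Phi n K hn v) (fun v => Phi n K hn v)
  · intro v hv
    rw [Finset.mem_coe, Finset.mem_filter] at hv ⊢
    refine ⟨Phi_mem n K hn hK v, ?_⟩
    rw [Phi_des n K hn hK1 v, hv.2]
  · intro v hv
    rw [Finset.mem_coe, Finset.mem_filter] at hv ⊢
    refine ⟨Phi_mem n K hn hK v, ?_⟩
    rw [Phi_des n K hn hK1 v, hv.2]
    omega
  · intro v hv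
    rw [Finset.mem_coe, Finset.mem_filter] at hv
    exact Phi_Phi n K hn hK1 hv.1
  · intro v hv
    rw [Finset.mem_coe, Finset.mem_filter] at hv
    exact Phi_Phi n K hn hK1 hv.1

theorem hpoly_palindromic (n : ℕ) (hn : 1 ≤ n) (K : Finset ℕ)
    (hK : ∀ k ∈ K, 1 ≤ k ∧ k ≤ n - 1) (i : ℕ) (hi : i ≤ n - 1) :
    (∑ v ∈ Wset n K, (X : Polynomial ℕ) ^ des n v).coeff i =
    (∑ v ∈ Wset n K, (X : Polynomial ℕ) ^ des n v).coeff (n - 1 - i) :=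
  hpoly_palindromic' n hn K hK i hi
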